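/- Let (μ_n)_{n∈ω} be a sequence in ℓ₁(ω×2) with sup_n ‖μ_n‖₁ < ∞. Then for every ε > 0 and every infinite set N ⊆ ω there is an infinite set J ⊆ N such that for every k ∈ J one has Σ_{j∈J, j≠k} ( |μ_k(j,0)| + |μ_k(j,1)| ) < ε. -/

import Mathlib

/-- The underlying countable set `ω × 2`. -/
abbrev S2 : Type := ℕ × Fin 2

open scoped ENNReal

lemma subSum_mono {g : ℕ → ℝ≥0∞} {A B : Set ℕ} (h : A ⊆ B) :
    ∑' j : A, g j ≤ ∑' j : B, g j := by
  rw [tsum_subtype, tsum_subtype]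
  exact ENNReal.tsum_le_tsum fun j =>
    Set.indicator_le_indicator_of_subset h (fun _ => zero_le) j

lemma subSum_le {g : ℕ → ℝ≥0∞} (A : Set ℕ) : ∑' j : A, g j ≤ ∑' j, g j := by
  rw [tsum_subtype]
  exact ENNReal.tsum_le_tsum fun j => Set.indicator_le_self _ _ j

lemma step_lemma (g : ℕ → ℕ → ℝ≥0∞) (ε : ℝ≥0∞) (N : Set ℕ)
    (H : ∀ J : Set ℕ, J ⊆ N → J.Infinite → ∃ k ∈ J, ε ≤ ∑' j : ↥(J \ {k}), g k j)
    (M : Set ℕ) (hMN : M ⊆ N) (hM : M.Infinite) :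
    ∃ M' : Set ℕ, ∃ B : ℕ → Set ℕ, M' ⊆ M ∧ M'.Infinite ∧
      ∀ k ∈ M', (B k ⊆ M \ {k}) ∧ (ε ≤ ∑' j : ↥(B k), g k j) ∧
        (∀ j ∈ M', j ≠ k → j ∉ B k) := by
  set f := hM.natEmbedding with hf
  set q : ℕ → ℕ → ℕ := fun i m => (f (Nat.pair i m) : ℕ) with hq
  have hqM : ∀ i m, q i m ∈ M := fun i m => (f (Nat.pair i m)).2
  have hqinj : ∀ {i m i' m'}, q i m = q i' m' → i = i' ∧ m = m' := by
    intro i m i' m' h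
    have : Nat.pair i m = Nat.pair i' m' := f.injective (Subtype.ext h)
    exact Nat.pair_eq_pair.mp this
  set P : ℕ → Set ℕ := fun i => Set.range (q i) with hP
  have hPM : ∀ i, P i ⊆ M := by rintro i x ⟨m, rfl⟩; exact hqM i m
  have hPinf : ∀ i, (P i).Infinite :=
    fun i => Set.infinite_range_of_injective (fun m m' h => (hqinj h).2)
  have hPdisj : ∀ {i i' x}, x ∈ P i → x ∈ P i' → i = i' := by
    rintro i i' x ⟨m, rfl⟩ ⟨m', hm'⟩
    exact (hqinj hm').1.symm
  -- choose a "bad" point in each piece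
  have hpick : ∀ i, ∃ k, k ∈ P i ∧ ε ≤ ∑' j : ↥(P i \ {k}), g k j := by
    intro i
    set G : Set ℕ := {k ∈ P i | ∑' j : ↥(P i \ {k}), g k j < ε} with hG
    have hGfin : G.Finite := by
      by_contra hGi
      obtain ⟨k, hkG, hk⟩ := H G (fun x hx => hMN (hPM i hx.1)) hGi
      have h1 : ∑' j : ↥(G \ {k}), g k j ≤ ∑' j : ↥(P i \ {k}), g k j :=
        subSum_mono (Set.diff_subset_diff_left (fun x hx => hx.1))
      exact lt_irrefl ε ((hk.trans h1).trans_lt hkG.2)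
    obtain ⟨k, hk⟩ := ((hPinf i).diff hGfin).nonempty
    refine ⟨k, hk.1, ?_⟩
    by_contra hlt
    exact hk.2 ⟨hk.1, not_le.mp hlt⟩
  choose n hn1 hn2 using hpick
  have hninj : Function.Injective n := fun i i' h => hPdisj (hn1 i) (h ▸ hn1 i')
  refine ⟨Set.range n, fun k => ⋃ i ∈ {i | n i = k}, (P i \ {k}),
    ?_, Set.infinite_range_of_injective hninj, ?_⟩
  · rintro x ⟨i, rfl⟩; exact hPM i (hn1 i)
  · rintro k ⟨i, rfl⟩
    refine ⟨?_, ?_, ?_⟩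
    · rintro x hx
      simp only [Set.mem_iUnion, Set.mem_setOf_eq] at hx
      obtain ⟨i', _, hx1, hx2⟩ := hx
      exact ⟨hPM i' hx1, hx2⟩
    · refine (hn2 i).trans (subSum_mono ?_)
      intro x hx
      simp only [Set.mem_iUnion, Set.mem_setOf_eq]
      exact ⟨i, rfl, hx⟩
    · rintro j ⟨i'', rfl⟩ hne hj
      simp only [Set.mem_iUnion, Set.mem_setOf_eq] at hj
      obtain ⟨i', hni', hj1, hj2⟩ := hj
      exact hj2 ((hPdisj hj1 (hn1 i'')).symm ▸ hni')

lemma key_lemma (g : ℕ → ℕ → ℝ≥0∞) (C : ℝ≥0∞) (hCfin : C ≠ ⊤)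
    (hg : ∀ k, ∑' j, g k j ≤ C) (ε : ℝ≥0∞) (hε0 : 0 < ε) (hεfin : ε ≠ ⊤)
    (N : Set ℕ) (hN : N.Infinite) :
    ∃ J : Set ℕ, J ⊆ N ∧ J.Infinite ∧ ∀ k ∈ J, ∑' j : ↥(J \ {k}), g k j < ε := by
  by_contra hcon
  push_neg at hcon
  have H : ∀ J : Set ℕ, J ⊆ N → J.Infinite → ∃ k ∈ J, ε ≤ ∑' j : ↥(J \ {k}), g k j := hcon
  -- choice function performing one step
  have hstep : ∀ M : {M : Set ℕ // M ⊆ N ∧ M.Infinite},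
      ∃ p : {M : Set ℕ // M ⊆ N ∧ M.Infinite} × (ℕ → Set ℕ),
        p.1.1 ⊆ M.1 ∧ ∀ k ∈ p.1.1, (p.2 k ⊆ M.1 \ {k}) ∧
          (ε ≤ ∑' j : ↥(p.2 k), g k j) ∧ (∀ j ∈ p.1.1, j ≠ k → j ∉ p.2 k) := by
    rintro ⟨M, hMN, hMinf⟩
    obtain ⟨M', B, h1, h2, h3⟩ := step_lemma g ε N H M hMN hMinf
    exact ⟨(⟨M', h1.trans hMN, h2⟩, B), h1, h3⟩
  choose F hF1 hF2 using hstep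
  set seq : ℕ → {M : Set ℕ // M ⊆ N ∧ M.Infinite} :=
    fun t => Nat.rec ⟨N, subset_rfl, hN⟩ (fun _ p => (F p).1) t with hseqdef
  have hseqsucc : ∀ t, seq (t + 1) = (F (seq t)).1 := fun t => rfl
  set Bf : ℕ → ℕ → Set ℕ := fun t => (F (seq t)).2 with hBf
  have hmono : ∀ s t, s ≤ t → (seq t).1 ⊆ (seq s).1 := by
    intro s t hst
    induction t with
    | zero => cases Nat.le_zero.mp hst; exact subset_rfl
    | succ t ih =>
      rcases Nat.lt_or_ge s (t+1) with h | h
      · exact ((hseqsucc t ▸ hF1 (seq t)) : (seq (t+1)).1 ⊆ (seq t).1).trans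
          (ih (Nat.lt_succ_iff.mp h))
      · cases le_antisymm hst h; exact subset_rfl
  -- pick T with C < T * ε
  obtain ⟨T, hT⟩ : ∃ T : ℕ, C < T * ε := by
    obtain ⟨T, hT⟩ := ENNReal.exists_nat_gt (ENNReal.div_lt_top hCfin hε0.ne' : C / ε < ⊤).ne
    exact ⟨T, (ENNReal.div_lt_iff (Or.inl hε0.ne') (Or.inl hεfin)).mp hT⟩
  -- pick k in seq T
  obtain ⟨k, hk⟩ := (seq T).2.2.nonempty
  have hkmem : ∀ s, s < T → k ∈ (seq (s + 1)).1 := fun s hs => hmono (s+1) T hs hk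
  have hprops : ∀ s, s < T → (Bf s k ⊆ (seq s).1 \ {k}) ∧
      (ε ≤ ∑' j : ↥(Bf s k), g k j) ∧
      (∀ j ∈ (seq (s+1)).1, j ≠ k → j ∉ Bf s k) := by
    intro s hs
    have := hF2 (seq s) k (hkmem s hs)
    exact ⟨this.1, this.2.1, fun j hj => this.2.2 j hj⟩
  -- pairwise disjointness
  have hdd : ∀ s s', s < s' → s' < T → Disjoint (Bf s k) (Bf s' k) := by
    intro s s' hlt hs'
    rw [Set.disjoint_right]
    intro x hx'
    have hx1 : x ∈ (seq s').1 \ {k} := (hprops s' hs').1 hx'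
    have hx2 : x ∈ (seq (s+1)).1 := hmono (s+1) s' hlt hx1.1
    exact (hprops s (by omega)).2.2 x hx2 hx1.2
  have hdisj : (↑(Finset.range T) : Set ℕ).Pairwise (Function.onFun Disjoint fun s => Bf s k) := by
    intro s hs s' hs' hne
    simp only [Finset.coe_range, Set.mem_Iio] at hs hs'
    rcases lt_or_gt_of_ne hne with h | h
    · exact hdd s s' h hs'
    · exact (hdd s' s h hs).symm
  -- sum up
  have hsum2 : (T : ℝ≥0∞) * ε ≤ C := by
    calc (T : ℝ≥0∞) * ε = ∑ _s ∈ Finset.range T, ε := by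
          rw [Finset.sum_const, Finset.card_range, nsmul_eq_mul]
      _ ≤ ∑ s ∈ Finset.range T, ∑' j : ↥(Bf s k), g k j :=
          Finset.sum_le_sum fun s hs => (hprops s (Finset.mem_range.mp hs)).2.1
      _ = ∑' j : ↥(⋃ s ∈ Finset.range T, Bf s k), g k j :=
          (Summable.tsum_finset_bUnion_disjoint hdisj fun i _ => ENNReal.summable).symm
      _ ≤ ∑' j, g k j := subSum_le _
      _ ≤ C := hg k
  exact absurd hsum2 (not_le.mpr hT)

/-- Rosenthal's lemma: if `(μ_n)` is a uniformly bounded sequence in `ℓ₁(ω × 2)`, then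
for every `ε > 0` and every infinite `N ⊆ ω` there is an infinite `J ⊆ N` such that
`|μ_k|(⋃_{j ∈ J∖{k}} c_j) < ε` for every `k ∈ J`. -/
theorem statement10 (μ : ℕ → S2 → ℝ) (hsum : ∀ n, Summable fun s => |μ n s|)
    (C : ℝ) (hC : ∀ n, (∑' s, |μ n s|) ≤ C) :
    ∀ ε > (0 : ℝ), ∀ N : Set ℕ, N.Infinite →
      ∃ J : Set ℕ, J ⊆ N ∧ J.Infinite ∧
        ∀ k ∈ J, (∑' j : ↥(J \ {k}), (|μ k ((j : ℕ), 0)| + |μ k ((j : ℕ), 1)|)) < ε := by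
  intro ε hε N hN
  set ν : ℕ → ℕ → ℝ := fun k j => |μ k (j, 0)| + |μ k (j, 1)| with hν
  have hν0 : ∀ k j, 0 ≤ ν k j := fun k j => add_nonneg (abs_nonneg _) (abs_nonneg _)
  have hνsum : ∀ k, Summable (ν k) := by
    intro k
    have h0 : Summable fun j : ℕ => |μ k (j, 0)| :=
      (hsum k).comp_injective (fun a b h => (Prod.mk.injEq _ _ _ _ ▸ h : _ ∧ _).1)
    have h1 : Summable fun j : ℕ => |μ k (j, 1)| :=
      (hsum k).comp_injective (fun a b h => (Prod.mk.injEq _ _ _ _ ▸ h : _ ∧ _).1)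
    exact h0.add h1
  have hνC : ∀ k, ∑' j, ν k j ≤ C := by
    intro k
    have heq : ∑' s : S2, |μ k s| = ∑' j : ℕ, ν k j := by
      rw [Summable.tsum_prod' (hsum k) (fun b => (hsum k).comp_injective fun c c' h => (Prod.ext_iff.mp h).2)]
      congr 1
      funext j
      rw [tsum_fintype, Fin.sum_univ_two]
    exact heq ▸ hC k
  set g : ℕ → ℕ → ℝ≥0∞ := fun k j => ENNReal.ofReal (ν k j) with hg
  have hgsum : ∀ (k : ℕ) (A : Set ℕ),
      ∑' j : A, g k (j : ℕ) = ENNReal.ofReal (∑' j : A, ν k (j : ℕ)) :=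
    fun k A => (ENNReal.ofReal_tsum_of_nonneg (fun j => hν0 k _) ((hνsum k).subtype A)).symm
  have hgC : ∀ k, ∑' j, g k j ≤ ENNReal.ofReal C := by
    intro k
    rw [← ENNReal.ofReal_tsum_of_nonneg (hν0 k) (hνsum k)]
    exact ENNReal.ofReal_le_ofReal (hνC k)
  obtain ⟨J, hJN, hJinf, hJ⟩ := key_lemma g (ENNReal.ofReal C) ENNReal.ofReal_ne_top hgC
    (ENNReal.ofReal ε) (ENNReal.ofReal_pos.mpr hε) ENNReal.ofReal_ne_top N hN
  refine ⟨J, hJN, hJinf, fun k hk => ?_⟩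
  have := hJ k hk
  rw [hgsum k (J \ {k})] at this
  exact (ENNReal.ofReal_lt_ofReal_iff hε).mp this
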